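/- Let Q=(O,T,q) be an ontology-mediated query with O formulated in first-order logic with equality and q a UCQ. If Q has a UCQ rewriting q_r in which every CQ disjunct has size at most n, then the canonical UCQ rewriting of size n — namely, the UCQ consisting of all pairs (A,a) viewed as CQs, where A is a T-ABox of size at most n and a is a certain answer to Q on A — is also a rewriting of Q. -/

import Mathlib

/-- A relational schema: a collection of relation names with arities. -/
structure Schema : Type 1 where
  Rel : Type
  arity : Rel → ℕ

/-- A fact over schema `S` with constants from `C`. -/
def Fct (S : Schema) (C : Type) : Type := (R : S.Rel) × (Fin (S.arity R) → C)

/-- Apply a function on constants to a fact. -/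
def mapFct {S : Schema} {C D : Type} (h : C → D) (f : Fct S C) : Fct S D :=
  ⟨f.1, h ∘ f.2⟩

/-- A database over schema `S` with constants from `C`: a set of facts. -/
abbrev DB (S : Schema) (C : Type) : Type := Set (Fct S C)

/-- A conjunctive query over schema `S` with `n` answer variables. -/
structure CQ (S : Schema) (n : ℕ) : Type 1 where
  V : Type
  ansVar : Fin n → V
  atoms : DB S V

/-- `t` is an answer to the CQ `q` on the database `D`. -/
def cqAns {S : Schema} {n : ℕ} (q : CQ S n) {C : Type} (D : DB S C) (t : Fin n → C) : Prop :=
  ∃ h : q.V → C, (∀ a ∈ q.atoms, mapFct h a ∈ D) ∧ h ∘ q.ansVar = t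

/-- A (possibly infinitary) union of conjunctive queries. -/
abbrev UCQ (S : Schema) (n : ℕ) : Type 1 := Set (CQ S n)

/-- `t` is an answer to the UCQ `q` on the database `D`. -/
def ucqAns {S : Schema} {n : ℕ} (q : UCQ S n) {C : Type} (D : DB S C) (t : Fin n → C) : Prop :=
  ∃ p ∈ q, cqAns p D t

/-- Containment of UCQs over all databases of the schema. -/
def Contained {S : Schema} {n : ℕ} (q1 q2 : UCQ S n) : Prop :=
  ∀ (C : Type) (D : DB S C) (t : Fin n → C), ucqAns q1 D t → ucqAns q2 D t

/-- A homomorphism from the CQ `q` to the CQ `p` (preserving atoms and answer variables). -/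
def CQHom {S : Schema} {n : ℕ} (q p : CQ S n) : Prop :=
  ∃ h : q.V → p.V, (∀ a ∈ q.atoms, mapFct h a ∈ p.atoms) ∧ h ∘ q.ansVar = p.ansVar

/-- An ontology over schema `T`, taken semantically: the class of its models, i.e.
a class of (possibly infinite) `T`-databases over arbitrary domains. -/
def Ontology (T : Schema) : Type 1 := (C : Type) → DB T C → Prop

/-- `t` is a certain answer to the OMQ `(O, T, q)` on the ABox `A`: in every model of
`A` and `O` (an interpretation into which `A` maps homomorphically via the
interpretation `ι` of its constants), `ι ∘ t` is an answer to `q`. -/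
def certAns {T : Schema} {n : ℕ} (O : Ontology T) (q : UCQ T n) {C : Type}
    (A : DB T C) (t : Fin n → C) : Prop :=
  ∀ (E : Type) (I : DB T E) (ι : C → E),
    (∀ f ∈ A, mapFct ι f ∈ I) → O E I → ucqAns q I (ι ∘ t)

/-- `qr` is a (possibly infinitary) UCQ rewriting of the OMQ `(O, T, q)`: on every
ABox, the answers to `qr` coincide with the certain answers of the OMQ. -/
def IsRewriting {T : Schema} {n : ℕ} (O : Ontology T) (q qr : UCQ T n) : Prop :=
  ∀ (C : Type) (A : DB T C) (t : Fin n → C), ucqAns qr A t ↔ certAns O q A t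

/-- The canonical UCQ rewriting of size `n` of the OMQ `(O, T, q)`: all pairs `(A, a)`
viewed as CQs, where `A` is a `T`-ABox with at most `n` facts and `a` is a certain
answer to the OMQ on `A`. (Every CQ is of the form `(A, a)` for `A` its set of atoms
viewed as an ABox and `a` its tuple of answer variables.) -/
def canonRewriting {T : Schema} {k : ℕ} (O : Ontology T) (q : UCQ T k) (n : ℕ) : UCQ T k :=
  { p | p.atoms.Finite ∧ p.atoms.ncard ≤ n ∧ certAns O q p.atoms p.ansVar }

theorem canonical_rewriting_of_bounded_size (T : Schema) (k : ℕ) (O : Ontology T)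
    (q : UCQ T k) (n : ℕ) (qr : UCQ T k) (hqr : IsRewriting O q qr)
    (hsize : ∀ p ∈ qr, p.atoms.Finite ∧ p.atoms.ncard ≤ n) :
    IsRewriting O q (canonRewriting O q n) := by
  intro C A t
  constructor
  · rintro ⟨p, ⟨hfin, hn, hcert⟩, h, hatoms, hans⟩
    intro E I ι hA hO
    have := hcert E I (ι ∘ h) (fun f hf => hA _ (hatoms f hf)) hO
    have heq : (ι ∘ h) ∘ p.ansVar = ι ∘ t := by
      rw [Function.comp_assoc, hans]
    rwa [heq] at this
  · intro hcert
    obtain ⟨p, hp, hc⟩ := (hqr C A t).mpr hcert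
    refine ⟨p, ⟨(hsize p hp).1, (hsize p hp).2, ?_⟩, hc⟩
    exact (hqr p.V p.atoms p.ansVar).mp
      ⟨p, hp, id, fun a ha => by exact ha, rfl⟩
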